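/- arXiv:2110.12636 — 7 statements merged into one kernel-verified Lean document; each statement's English description precedes it below -/
import Mathlib

section
/- Let τ₁ ≥ 0, τ₀ ≥ 0, V₀ > 0, V₁ > 0 with not both τ₀ and τ₁ zero. Define Z(φ) = (τ₁ − φ·τ₀)/√(V₁ + φ²·V₀) for φ ≥ 0. Then Z is strictly decreasing on [0, ∞), Z(0) = τ₁/√V₁, and Z(φ) → −τ₀/√V₀ as φ → ∞. -/
theorem stmt_0 (τ1 τ0 V0 V1 : ℝ) (hτ1 : 0 ≤ τ1) (hτ0 : 0 ≤ τ0)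
    (hV0 : 0 < V0) (hV1 : 0 < V1) (hne : ¬ (τ0 = 0 ∧ τ1 = 0)) :
    StrictAntiOn (fun φ : ℝ => (τ1 - φ * τ0) / Real.sqrt (V1 + φ ^ 2 * V0)) (Set.Ici 0) ∧
    (τ1 - (0:ℝ) * τ0) / Real.sqrt (V1 + (0:ℝ) ^ 2 * V0) = τ1 / Real.sqrt V1 ∧
    Filter.Tendsto (fun φ : ℝ => (τ1 - φ * τ0) / Real.sqrt (V1 + φ ^ 2 * V0))
      Filter.atTop (nhds (-τ0 / Real.sqrt V0)) := by
  have hpos : ∀ φ : ℝ, 0 < V1 + φ ^ 2 * V0 := fun φ => by positivity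
  have hspos : ∀ φ : ℝ, 0 < Real.sqrt (V1 + φ ^ 2 * V0) :=
    fun φ => Real.sqrt_pos.2 (hpos φ)
  have hderiv : ∀ φ : ℝ, HasDerivAt (fun φ : ℝ => (τ1 - φ * τ0) / Real.sqrt (V1 + φ ^ 2 * V0))
      (-(τ0 * V1 + φ * V0 * τ1) / (Real.sqrt (V1 + φ ^ 2 * V0)) ^ 3) φ := by
    intro φ
    have h1 : HasDerivAt (fun φ : ℝ => V1 + φ ^ 2 * V0) (2 * φ * V0) φ := by
      simpa using ((hasDerivAt_pow 2 φ).mul_const V0).const_add V1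
    have h2 := h1.sqrt (ne_of_gt (hpos φ))
    have h3 : HasDerivAt (fun φ : ℝ => τ1 - φ * τ0) (-τ0) φ := by
      simpa using ((hasDerivAt_id φ).mul_const τ0).const_sub τ1
    have hs := hspos φ
    have := h3.div h2 (ne_of_gt hs)
    refine this.congr_deriv (Eq.symm ?_)
    have hsq : Real.sqrt (V1 + φ ^ 2 * V0) ^ 2 = V1 + φ ^ 2 * V0 :=
      Real.sq_sqrt (le_of_lt (hpos φ))
    field_simp
    linear_combination τ0 * hsq
  have hcont : ContinuousOn (fun φ : ℝ => (τ1 - φ * τ0) / Real.sqrt (V1 + φ ^ 2 * V0)) (Set.Ici 0) :=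
    fun x _ => ((hderiv x).continuousAt).continuousWithinAt
  refine ⟨?_, by simp, ?_⟩
  · apply strictAntiOn_of_deriv_neg (convex_Ici 0) hcont
    intro x hx
    rw [interior_Ici] at hx
    rw [(hderiv x).deriv]
    apply div_neg_of_neg_of_pos
    · have : 0 < τ0 * V1 + x * V0 * τ1 := by
        rcases eq_or_lt_of_le hτ0 with h | h
        · have hτ1' : 0 < τ1 := by
            rcases eq_or_lt_of_le hτ1 with h1 | h1
            · exact absurd ⟨h.symm, h1.symm⟩ hne
            · exact h1
          nlinarith [mul_pos (mul_pos hx.out hV0) hτ1']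
        · nlinarith [mul_pos h hV1,
            mul_nonneg (mul_nonneg hx.out.le hV0.le) hτ1]
      linarith
    · positivity
  · have hev : ∀ᶠ φ : ℝ in Filter.atTop,
        (τ1 - φ * τ0) / Real.sqrt (V1 + φ ^ 2 * V0)
          = (τ1 / φ - τ0) / Real.sqrt (V1 / φ ^ 2 + V0) := by
      filter_upwards [Filter.eventually_gt_atTop (0:ℝ)] with φ hφ
      have hφ2 : (0:ℝ) < φ ^ 2 := by positivity
      have h0 : (0:ℝ) < V1 / φ ^ 2 + V0 := by positivity
      have hss : 0 < Real.sqrt (V1 / φ ^ 2 + V0) := Real.sqrt_pos.2 h0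
      have : V1 + φ ^ 2 * V0 = φ ^ 2 * (V1 / φ ^ 2 + V0) := by field_simp
      rw [this, Real.sqrt_mul (le_of_lt hφ2), Real.sqrt_sq (le_of_lt hφ)]
      field_simp
    rw [Filter.tendsto_congr' hev]
    have h1 : Filter.Tendsto (fun φ : ℝ => τ1 / φ - τ0) Filter.atTop (nhds (-τ0)) := by
      have := (tendsto_const_nhds (x := τ1)).div_atTop (f := fun φ : ℝ => τ1)
        (Filter.tendsto_id (α := ℝ))
      simpa using this.sub (tendsto_const_nhds (x := τ0))
    have h2 : Filter.Tendsto (fun φ : ℝ => Real.sqrt (V1 / φ ^ 2 + V0)) Filter.atTop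
        (nhds (Real.sqrt V0)) := by
      have : Filter.Tendsto (fun φ : ℝ => V1 / φ ^ 2 + V0) Filter.atTop (nhds (0 + V0)) := by
        exact ((tendsto_const_nhds (x := V1)).div_atTop
          (Filter.tendsto_pow_atTop (by norm_num))).add tendsto_const_nhds
      simpa [Function.comp_def] using (Real.continuous_sqrt.tendsto (0 + V0)).comp this
    exact h1.div h2 (ne_of_gt (Real.sqrt_pos.2 hV0))
end

section
/- Let τ₁ > 0, τ₀ > 0, V₀ > 0, V₁ > 0, and let z_c be any real number. Define Z(φ) = (τ₁ − φ·τ₀)/√(V₁ + φ²·V₀). Then the equation Z(φ) = z_c has at most one solution φ ∈ [0, ∞). -/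
theorem stmt_1 (τ1 τ0 V0 V1 zc : ℝ) (hτ1 : 0 < τ1) (hτ0 : 0 < τ0)
    (hV0 : 0 < V0) (hV1 : 0 < V1) :
    ∀ φ1 ∈ Set.Ici (0:ℝ), ∀ φ2 ∈ Set.Ici (0:ℝ),
      (τ1 - φ1 * τ0) / Real.sqrt (V1 + φ1 ^ 2 * V0) = zc →
      (τ1 - φ2 * τ0) / Real.sqrt (V1 + φ2 ^ 2 * V0) = zc →
      φ1 = φ2 := by
  set f : ℝ → ℝ := fun φ => (τ1 - φ * τ0) / Real.sqrt (V1 + φ ^ 2 * V0) with hfdef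
  have hS : ∀ φ : ℝ, 0 < V1 + φ ^ 2 * V0 := fun φ => by positivity
  have hsq : ∀ φ : ℝ, 0 < Real.sqrt (V1 + φ ^ 2 * V0) :=
    fun φ => Real.sqrt_pos.mpr (hS φ)
  have hderiv : ∀ φ : ℝ, HasDerivAt f
      (-(τ0 * V1 + φ * V0 * τ1) /
        ((V1 + φ ^ 2 * V0) * Real.sqrt (V1 + φ ^ 2 * V0))) φ := by
    intro φ
    have h1 : HasDerivAt (fun x : ℝ => τ1 - x * τ0) (-(1 * τ0)) φ :=
      ((hasDerivAt_id φ).mul_const τ0).const_sub τ1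
    have h2 : HasDerivAt (fun x : ℝ => V1 + x ^ 2 * V0) (2 * φ * V0) φ := by
      simpa using ((hasDerivAt_pow 2 φ).mul_const V0).const_add V1
    have h3 : HasDerivAt (fun x : ℝ => Real.sqrt (V1 + x ^ 2 * V0))
        (1 / (2 * Real.sqrt (V1 + φ ^ 2 * V0)) * (2 * φ * V0)) φ :=
      (Real.hasDerivAt_sqrt (hS φ).ne').comp φ h2
    have h4 := h1.div h3 (hsq φ).ne'
    convert h4 using 1
    case e'_4 => rfl
    case e'_5 => rfl
    case e'_8 => rfl
    have hmm : Real.sqrt (V1 + φ ^ 2 * V0) * Real.sqrt (V1 + φ ^ 2 * V0)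
        = V1 + φ ^ 2 * V0 := Real.mul_self_sqrt (hS φ).le
    rw [show V1 + φ ^ 2 * V0 = Real.sqrt (V1 + φ ^ 2 * V0) * Real.sqrt (V1 + φ ^ 2 * V0)
      from hmm.symm]
    have hne := (hsq φ).ne'
    have harg : Real.sqrt (φ ^ 2 * V0 + V1) = Real.sqrt (V1 + φ ^ 2 * V0) := by
      rw [show φ ^ 2 * V0 + V1 = V1 + φ ^ 2 * V0 from by ring]
    field_simp
    rw [Real.sqrt_sq (hsq φ).le]
    linear_combination (τ0 * Real.sqrt (V1 + φ ^ 2 * V0) ^ 2) * Real.sq_sqrt (hS φ).le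
  have hcont : Continuous f := by
    apply Continuous.div
    · fun_prop
    · fun_prop
    · exact fun x => (hsq x).ne'
  have hanti : StrictAntiOn f (Set.Ici (0:ℝ)) := by
    apply strictAntiOn_of_deriv_neg (convex_Ici 0) hcont.continuousOn
    intro x hx
    rw [interior_Ici] at hx
    rw [(hderiv x).deriv]
    apply div_neg_of_neg_of_pos
    · have hx' : (0:ℝ) < x := hx
      nlinarith [mul_pos hτ0 hV1, mul_nonneg (mul_nonneg hx'.le hV0.le) hτ1.le]
    · exact mul_pos (hS x) (hsq x)
  intro φ1 h1 φ2 h2 e1 e2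
  exact hanti.injOn h1 h2 (by rw [hfdef]; simp only []; rw [e1, e2])
end

section
/- Let τ̂₁ ≥ 0, τ̂₀ ≥ 0, and let U₁, L₀ satisfy τ̂₁ ≤ U₁ and 0 ≤ L₀ ≤ τ̂₀. Define b = τ̂₁·τ̂₀, a_u = τ̂₀² − (L₀ − τ̂₀)², c_u = τ̂₁² − (U₁ − τ̂₁)². Then a_u ≥ 0 and b² − a_u·c_u ≥ 0. -/
theorem stmt_3 (τ1 τ0 U1 L0 : ℝ) (hτ1 : 0 ≤ τ1) (hτ0 : 0 ≤ τ0)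
    (hU1 : τ1 ≤ U1) (hL0 : 0 ≤ L0) (hL0' : L0 ≤ τ0) :
    0 ≤ τ0 ^ 2 - (L0 - τ0) ^ 2 ∧
    0 ≤ (τ1 * τ0) ^ 2 - (τ0 ^ 2 - (L0 - τ0) ^ 2) * (τ1 ^ 2 - (U1 - τ1) ^ 2) := by
  have ha : 0 ≤ τ0 ^ 2 - (L0 - τ0) ^ 2 := by nlinarith
  refine ⟨ha, ?_⟩
  rcases le_or_gt (τ1 ^ 2 - (U1 - τ1) ^ 2) 0 with hc | hc
  · nlinarith [mul_nonneg (mul_nonneg hτ1 hτ1) (mul_nonneg hτ0 hτ0)]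
  · nlinarith [mul_le_mul (by nlinarith : τ0 ^ 2 - (L0 - τ0) ^ 2 ≤ τ0 ^ 2)
      (by nlinarith : τ1 ^ 2 - (U1 - τ1) ^ 2 ≤ τ1 ^ 2) hc.le (sq_nonneg τ0)]
end

section
/- Let τ̂₁ > 0, τ̂₀ > 0, 0 < L₁ < τ̂₁, τ̂₀ < U₀ < 2τ̂₀. Define b = τ̂₁τ̂₀, a_l = τ̂₀² − (U₀ − τ̂₀)², c_l = τ̂₁² − (L₁ − τ̂₁)², and φ_l = (b − √(b² − a_l c_l))/a_l. Then a_l > 0, c_l > 0, 0 < φ_l, and φ_l ≤ τ̂₁/τ̂₀; moreover, setting φ = φ_l makes the lower MOVER limit τ̂₁ − φτ̂₀ − √((L₁ − τ̂₁)² + φ²(U₀ − τ̂₀)²) equal to zero. -/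
theorem stmt_4 (τ1 τ0 L1 U0 : ℝ) (hτ1 : 0 < τ1) (hτ0 : 0 < τ0)
    (hL1 : 0 < L1) (hL1' : L1 < τ1) (hU0 : τ0 < U0) (hU0' : U0 < 2 * τ0) :
    let b := τ1 * τ0
    let al := τ0 ^ 2 - (U0 - τ0) ^ 2
    let cl := τ1 ^ 2 - (L1 - τ1) ^ 2
    let φl := (b - Real.sqrt (b ^ 2 - al * cl)) / al
    0 < al ∧ 0 < cl ∧ 0 < φl ∧ φl ≤ τ1 / τ0 ∧
      τ1 - φl * τ0 - Real.sqrt ((L1 - τ1) ^ 2 + φl ^ 2 * (U0 - τ0) ^ 2) = 0 := by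
  intro b al cl φl
  have hbd : b = τ1 * τ0 := rfl
  have had : al = τ0 ^ 2 - (U0 - τ0) ^ 2 := rfl
  have hcd : cl = τ1 ^ 2 - (L1 - τ1) ^ 2 := rfl
  have hφd : φl = (b - Real.sqrt (b ^ 2 - al * cl)) / al := rfl
  clear_value b al cl φl
  have hal : 0 < al := by rw [had]; nlinarith
  have hcl : 0 < cl := by rw [hcd]; nlinarith
  have hb : 0 < b := by rw [hbd]; positivity
  have hD : 0 ≤ b ^ 2 - al * cl := by
    rw [hbd, had, hcd]
    nlinarith [sq_nonneg (L1 - τ1), sq_nonneg (U0 - τ0),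
      mul_nonneg (sq_nonneg (U0 - τ0)) hcl.le, hcd]
  set s := Real.sqrt (b ^ 2 - al * cl) with hs
  have hs0 : 0 ≤ s := Real.sqrt_nonneg _
  have hs2 : s ^ 2 = b ^ 2 - al * cl := Real.sq_sqrt hD
  have hsb : s < b := by nlinarith [mul_pos hal hcl]
  have hφl : 0 < φl := by rw [hφd]; exact div_pos (by linarith) hal
  -- key inequality : τ1 * (U0 - τ0)^2 ≤ τ0 * s
  have hkey : τ1 * (U0 - τ0) ^ 2 ≤ τ0 * s := by
    have h1 : (τ1 * (U0 - τ0) ^ 2) ^ 2 ≤ (τ0 * s) ^ 2 := by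
      have hfac : 0 ≤ (τ0 ^ 2 - (U0 - τ0) ^ 2) *
          (τ0 ^ 2 * (L1 - τ1) ^ 2 + τ1 ^ 2 * (U0 - τ0) ^ 2) := by
        rw [← had]; positivity
      rw [show (τ0 * s) ^ 2 = τ0 ^ 2 * s ^ 2 from by ring, hs2, hbd, had, hcd]
      nlinarith [hfac]
    have h2 : 0 ≤ τ1 * (U0 - τ0) ^ 2 := by positivity
    have h3 : 0 ≤ τ0 * s := by positivity
    exact le_of_pow_le_pow_left₀ two_ne_zero h3 h1
  have hle : φl ≤ τ1 / τ0 := by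
    rw [hφd, div_le_div_iff₀ hal hτ0]
    have h4 : τ1 * al = τ0 * b - τ1 * (U0 - τ0) ^ 2 := by rw [had, hbd]; ring
    nlinarith
  refine ⟨hal, hcl, hφl, hle, ?_⟩
  have hτφ : φl * τ0 ≤ τ1 := by
    have := (div_le_div_iff₀ hal hτ0).mp (hφd ▸ hle)
    have h4 : τ1 * al = τ0 * b - τ1 * (U0 - τ0) ^ 2 := by rw [had, hbd]; ring
    rw [hφd, div_mul_eq_mul_div, div_le_iff₀ hal]
    nlinarith
  have hmul : φl * al = b - s := by
    rw [hφd]; field_simp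
  have h4 : al ^ 2 * φl ^ 2 = (b - s) ^ 2 := by rw [← hmul]; ring
  have h5 : al * (al * φl ^ 2 - 2 * b * φl + cl) = al * 0 := by
    rw [mul_zero]; linear_combination h4 - 2 * b * hmul + hs2
  have hquad : al * φl ^ 2 - 2 * b * φl + cl = 0 := mul_left_cancel₀ hal.ne' h5
  have hsq : (L1 - τ1) ^ 2 + φl ^ 2 * (U0 - τ0) ^ 2 = (τ1 - φl * τ0) ^ 2 := by
    linear_combination -hquad + (φl ^ 2) * had + hcd - 2 * φl * hbd
  rw [hsq, Real.sqrt_sq (by linarith)]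
  ring
end

section
/- Consider two strata with group sample sizes n_{s g} > 0 for s ∈ {1,2}, g ∈ {0,1}, success probabilities p_{s g} ∈ [0,1], and suppose the risk difference is constant: p_{11} − p_{10} = p_{21} − p_{20} = Δ. Let r_s = n_{s1}/n_{s0}. Then the expectation of the unstratified (crude) risk-difference estimate satisfies (n_{11}p_{11} + n_{21}p_{21})/(n_{11} + n_{21}) − (n_{10}p_{10} + n_{20}p_{20})/(n_{10} + n_{20}) = Δ + n_{10}n_{20}(r₁ − r₂)(p_{10} − p_{20}) / ((n_{10}r₁ + n_{20}r₂)(n_{10} + n_{20})). -/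
theorem stmt_6 (n10 n11 n20 n21 p10 p11 p20 p21 Δ : ℝ)
    (h10 : 0 < n10) (h11 : 0 < n11) (h20 : 0 < n20) (h21 : 0 < n21)
    (hp10 : p10 ∈ Set.Icc (0:ℝ) 1) (hp11 : p11 ∈ Set.Icc (0:ℝ) 1)
    (hp20 : p20 ∈ Set.Icc (0:ℝ) 1) (hp21 : p21 ∈ Set.Icc (0:ℝ) 1)
    (hΔ1 : p11 - p10 = Δ) (hΔ2 : p21 - p20 = Δ) :
    (n11 * p11 + n21 * p21) / (n11 + n21) - (n10 * p10 + n20 * p20) / (n10 + n20) =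
      Δ + n10 * n20 * (n11 / n10 - n21 / n20) * (p10 - p20) /
        ((n10 * (n11 / n10) + n20 * (n21 / n20)) * (n10 + n20)) := by
  have e1 : p11 = Δ + p10 := by linarith
  have e2 : p21 = Δ + p20 := by linarith
  subst e1 e2
  have c0 : n10 * (n11 / n10) + n20 * (n21 / n20) = n11 + n21 := by
    field_simp
  rw [c0]
  have h1 : n11 + n21 > 0 := by linarith
  have h2 : n10 + n20 > 0 := by linarith
  field_simp
  ring
end

section
/- Under the setup of the two-stratum bias identity, the unstratified risk-difference expectation equals Δ if and only if p_{10} = p_{20} or n_{11}/n_{10} = n_{21}/n_{20}. -/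
theorem stmt_7 (n10 n11 n20 n21 p10 p11 p20 p21 Δ : ℝ)
    (h10 : 0 < n10) (h11 : 0 < n11) (h20 : 0 < n20) (h21 : 0 < n21)
    (hp10 : p10 ∈ Set.Icc (0:ℝ) 1) (hp11 : p11 ∈ Set.Icc (0:ℝ) 1)
    (hp20 : p20 ∈ Set.Icc (0:ℝ) 1) (hp21 : p21 ∈ Set.Icc (0:ℝ) 1)
    (hΔ1 : p11 - p10 = Δ) (hΔ2 : p21 - p20 = Δ) :
    ((n11 * p11 + n21 * p21) / (n11 + n21) - (n10 * p10 + n20 * p20) / (n10 + n20) = Δ)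
      ↔ (p10 = p20 ∨ n11 / n10 = n21 / n20) := by
  have hA : (0:ℝ) < n11 + n21 := by linarith
  have hB : (0:ℝ) < n10 + n20 := by linarith
  have h1 : p11 = Δ + p10 := by linarith
  have h2 : p21 = Δ + p20 := by linarith
  subst h1 h2
  have key : ((n11 * (Δ + p10) + n21 * (Δ + p20)) / (n11 + n21)
      - (n10 * p10 + n20 * p20) / (n10 + n20) = Δ)
      ↔ (p10 - p20) * (n11 * n20 - n10 * n21) = 0 := by
    rw [div_sub_div _ _ hA.ne' hB.ne', div_eq_iff (by positivity)]
    constructor <;> intro h <;> nlinarith [h]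
  rw [key, mul_eq_zero, sub_eq_zero, sub_eq_zero,
    div_eq_div_iff h10.ne' h20.ne']
  constructor <;> rintro (h | h)
  · exact Or.inl h
  · exact Or.inr (by linarith)
  · exact Or.inl h
  · exact Or.inr (by linarith)
end

section
/- Let τ̂₁ > 0, τ̂₀ > 0 and suppose 0 < L₀ < τ̂₀ < U₀ < 2τ̂₀ and 0 < L₁ < τ̂₁ < U₁ < 2τ̂₁. Define φ_l = (b − √(b² − a_l c_l))/a_l and φ_u = (b + √(b² − a_u c_u))/a_u with b = τ̂₁τ̂₀, a_l = τ̂₀² − (U₀ − τ̂₀)², c_l = τ̂₁² − (L₁ − τ̂₁)², a_u = τ̂₀² − (L₀ − τ̂₀)², c_u = τ̂₁² − (U₁ − τ̂₁)². Then 0 < φ_l ≤ τ̂₁/τ̂₀ ≤ φ_u. -/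
theorem stmt_15 (τ1 τ0 L1 U1 L0 U0 : ℝ) (hτ1 : 0 < τ1) (hτ0 : 0 < τ0)
    (hL0 : 0 < L0) (hL0' : L0 < τ0) (hU0 : τ0 < U0) (hU0' : U0 < 2 * τ0)
    (hL1 : 0 < L1) (hL1' : L1 < τ1) (hU1 : τ1 < U1) (hU1' : U1 < 2 * τ1) :
    let b := τ1 * τ0
    let al := τ0 ^ 2 - (U0 - τ0) ^ 2
    let cl := τ1 ^ 2 - (L1 - τ1) ^ 2
    let au := τ0 ^ 2 - (L0 - τ0) ^ 2
    let cu := τ1 ^ 2 - (U1 - τ1) ^ 2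
    let φl := (b - Real.sqrt (b ^ 2 - al * cl)) / al
    let φu := (b + Real.sqrt (b ^ 2 - au * cu)) / au
    0 < φl ∧ φl ≤ τ1 / τ0 ∧ τ1 / τ0 ≤ φu := by
  intro b al cl au cu φl φu
  have hb : 0 < b := mul_pos hτ1 hτ0
  have hal : 0 < al := by simp only [al]; nlinarith
  have hcl : 0 < cl := by simp only [cl]; nlinarith
  have hau : 0 < au := by simp only [au]; nlinarith
  have hcu : 0 < cu := by simp only [cu]; nlinarith
  have halt : al ≤ τ0 ^ 2 := by simp only [al]; nlinarith [sq_nonneg (U0 - τ0)]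
  have hclt : cl ≤ τ1 ^ 2 := by simp only [cl]; nlinarith [sq_nonneg (L1 - τ1)]
  have haut : au ≤ τ0 ^ 2 := by simp only [au]; nlinarith [sq_nonneg (L0 - τ0)]
  have hdl : 0 ≤ b ^ 2 - al * cl := by
    have h1 : al * cl ≤ τ0 ^ 2 * τ1 ^ 2 := by nlinarith
    have h2 : b ^ 2 = τ0 ^ 2 * τ1 ^ 2 := by simp only [b]; ring
    linarith
  set sl := Real.sqrt (b ^ 2 - al * cl) with hsl
  set su := Real.sqrt (b ^ 2 - au * cu) with hsu
  have hsl0 : 0 ≤ sl := Real.sqrt_nonneg _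
  have hsu0 : 0 ≤ su := Real.sqrt_nonneg _
  have hslb : sl < b := by
    rw [hsl, Real.sqrt_lt' hb]
    nlinarith
  have hident : (τ1 * (τ0 ^ 2 - al)) ^ 2 ≤ τ0 ^ 2 * (b ^ 2 - al * cl) := by
    have hx : 0 ≤ al * (τ0 ^ 2 * (L1 - τ1) ^ 2 + τ1 ^ 2 * (U0 - τ0) ^ 2) :=
      mul_nonneg hal.le (add_nonneg (mul_nonneg (sq_nonneg τ0) (sq_nonneg (L1 - τ1)))
        (mul_nonneg (sq_nonneg τ1) (sq_nonneg (U0 - τ0))))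
    have heq : τ0 ^ 2 * (b ^ 2 - al * cl) - (τ1 * (τ0 ^ 2 - al)) ^ 2 =
        al * (τ0 ^ 2 * (L1 - τ1) ^ 2 + τ1 ^ 2 * (U0 - τ0) ^ 2) := by
      simp only [b, al, cl]; ring
    linarith
  have key : τ1 * (τ0 ^ 2 - al) ≤ τ0 * sl := by
    have hnn : 0 ≤ τ1 * (τ0 ^ 2 - al) := mul_nonneg hτ1.le (by linarith)
    calc τ1 * (τ0 ^ 2 - al) = Real.sqrt ((τ1 * (τ0 ^ 2 - al)) ^ 2) :=
          (Real.sqrt_sq hnn).symm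
      _ ≤ Real.sqrt (τ0 ^ 2 * (b ^ 2 - al * cl)) := Real.sqrt_le_sqrt hident
      _ = τ0 * sl := by
          rw [Real.sqrt_mul (sq_nonneg τ0), Real.sqrt_sq hτ0.le, hsl]
  clear_value sl su
  have hbτ : b * τ0 = τ1 * τ0 ^ 2 := by simp only [b]; ring
  refine ⟨div_pos (by linarith) hal, ?_, ?_⟩
  · rw [div_le_div_iff₀ hal hτ0]
    nlinarith [key, hbτ]
  · rw [div_le_div_iff₀ hτ0 hau, ← hsu]
    calc τ1 * au ≤ τ1 * τ0 ^ 2 := mul_le_mul_of_nonneg_left haut hτ1.le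
      _ = b * τ0 := hbτ.symm
      _ ≤ (b + su) * τ0 := by
          have hr : (b + su) * τ0 = b * τ0 + su * τ0 := by ring
          linarith [mul_nonneg hsu0 hτ0.le]
end
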